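/- Generically, resolvents are asymptotically regular: the set {T : X → X firmly nonexpansive : for every x ∈ X, ‖T^{n+1}x − Tⁿx‖ → 0 as n → ∞} is a dense G_δ in (J(X), ρ̂): there exists a sequence (O_n) of subsets of J(X), each ρ̂-open in J(X) and ρ̂-dense in J(X), whose intersection equals this set. -/

import Mathlib

open RealInnerProductSpace Filter

set_option linter.unusedSectionVars false
set_option maxHeartbeats 1000000

variable {X : Type*} [NormedAddCommGroup X] [InnerProductSpace ℝ X] [CompleteSpace X]

/-- `T` is nonexpansive. -/
def Nonexpansive (T : X → X) : Prop := ∀ x y : X, ‖T x - T y‖ ≤ ‖x - y‖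

/-- `T` is firmly nonexpansive. -/
def FirmlyNonexpansive (T : X → X) : Prop :=
  ∀ x y : X, ‖T x - T y‖ ^ 2 ≤ ⟪x - y, T x - T y⟫

/-- `‖T₁ - T₂‖ₙ = sup_{‖x‖ ≤ n} ‖T₁ x - T₂ x‖`. -/
noncomputable def ballSup (T₁ T₂ : X → X) (n : ℕ) : ℝ :=
  sSup {r : ℝ | ∃ x : X, ‖x‖ ≤ (n : ℝ) ∧ r = ‖T₁ x - T₂ x‖}

/-- The metric `ρ` on nonexpansive maps. -/
noncomputable def rho (T₁ T₂ : X → X) : ℝ :=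
  ∑' n : ℕ, (1 / 2 ^ (n + 1)) *
    (ballSup T₁ T₂ (n + 1) / (1 + ballSup T₁ T₂ (n + 1)))

/-- The metric `ρ̂` on firmly nonexpansive maps: `ρ̂(T₁,T₂) = ρ(2T₁ - Id, 2T₂ - Id)`. -/
noncomputable def rhoHat (T₁ T₂ : X → X) : ℝ :=
  rho (fun x => (2 : ℝ) • T₁ x - x) (fun x => (2 : ℝ) • T₂ x - x)

/-- `T` is super-regular with limit point `xT`. -/
def SuperRegularAt (T : X → X) (xT : X) : Prop :=
  ∀ s : ℝ, 0 < s → ∀ ε : ℝ, 0 < ε → ∃ N : ℕ, ∀ n ≥ N, ∀ x : X, ‖x‖ ≤ s → ‖T^[n] x - xT‖ < ε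

/-- `T` is super-regular. -/
def SuperRegular (T : X → X) : Prop := ∃ xT : X, SuperRegularAt T xT

/-- `T` is a (Banach) contraction. -/
def Contraction (T : X → X) : Prop :=
  ∃ l : ℝ, 0 ≤ l ∧ l < 1 ∧ ∀ x y : X, ‖T x - T y‖ ≤ l * ‖x - y‖

/- ### Auxiliary lemmas -/

lemma FirmlyNonexpansive.nonexpansive {T : X → X} (hT : FirmlyNonexpansive T) :
    Nonexpansive T := by
  intro x y
  have h := hT x y
  have h2 : ⟪x - y, T x - T y⟫ ≤ ‖x - y‖ * ‖T x - T y‖ := real_inner_le_norm _ _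
  nlinarith [norm_nonneg (T x - T y), norm_nonneg (x - y)]

lemma FirmlyNonexpansive.key {T : X → X} (hT : FirmlyNonexpansive T) (x y : X) :
    ‖T x - T y‖ ^ 2 + ‖(x - T x) - (y - T y)‖ ^ 2 ≤ ‖x - y‖ ^ 2 := by
  have h := hT x y
  have e0 : (x - T x) - (y - T y) = (x - y) - (T x - T y) := by abel
  have e : ‖(x - T x) - (y - T y)‖ ^ 2
      = ‖x - y‖ ^ 2 - 2 * ⟪x - y, T x - T y⟫ + ‖T x - T y‖ ^ 2 := by
    rw [e0, norm_sub_sq_real]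
  linarith

lemma FirmlyNonexpansive.reflection_nonexpansive {T : X → X} (hT : FirmlyNonexpansive T) :
    Nonexpansive (fun x => (2 : ℝ) • T x - x) := by
  intro x y
  have h := hT x y
  have e0 : ((2:ℝ) • T x - x) - ((2:ℝ) • T y - y) = (2:ℝ) • (T x - T y) - (x - y) := by
    rw [smul_sub]; abel
  have e : ‖((2:ℝ) • T x - x) - ((2:ℝ) • T y - y)‖ ^ 2
      = 4 * ‖T x - T y‖ ^ 2 - 4 * ⟪x - y, T x - T y⟫ + ‖x - y‖ ^ 2 := by
    rw [e0, norm_sub_sq_real, real_inner_smul_left, norm_smul, real_inner_comm]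
    simp [mul_pow]
    ring
  nlinarith [norm_nonneg (((2:ℝ) • T x - x) - ((2:ℝ) • T y - y)), norm_nonneg (x - y)]

lemma Nonexpansive.iterate_diff_antitone {T : X → X} (hT : Nonexpansive T) (x : X)
    {j k : ℕ} (hjk : j ≤ k) :
    ‖T^[k+1] x - T^[k] x‖ ≤ ‖T^[j+1] x - T^[j] x‖ := by
  induction k with
  | zero => simp_all
  | succ k ih =>
    rcases Nat.lt_or_ge j (k+1) with h | h
    · refine le_trans ?_ (ih (Nat.lt_succ_iff.mp h))
      rw [Function.iterate_succ_apply' T (k+1), Function.iterate_succ_apply' T k]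
      exact hT _ _
    · have : j = k + 1 := le_antisymm hjk h
      subst this; exact le_refl _

lemma Nonexpansive.iterate_norm_bound {T : X → X} (hT : Nonexpansive T) (x : X) (k : ℕ) :
    ‖T^[k] x‖ ≤ ‖x‖ + k * ‖T 0‖ := by
  induction k with
  | zero => simp
  | succ k ih =>
    rw [Function.iterate_succ_apply']
    calc ‖T (T^[k] x)‖ ≤ ‖T (T^[k] x) - T 0‖ + ‖T 0‖ := by
          simpa using norm_add_le (T (T^[k] x) - T 0) (T 0)
      _ ≤ ‖T^[k] x - 0‖ + ‖T 0‖ := by gcongr; exact hT _ _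
      _ ≤ (‖x‖ + k * ‖T 0‖) + ‖T 0‖ := by rw [sub_zero]; gcongr
      _ = ‖x‖ + (k+1 : ℕ) * ‖T 0‖ := by push_cast; ring

lemma FirmlyNonexpansive.telescoping {T : X → X} (hT : FirmlyNonexpansive T) (x y : X) (M : ℕ) :
    ∑ k ∈ Finset.range M, ‖(T^[k] x - T^[k+1] x) - (T^[k] y - T^[k+1] y)‖ ^ 2
      ≤ ‖x - y‖ ^ 2 - ‖T^[M] x - T^[M] y‖ ^ 2 := by
  induction M with
  | zero => simp
  | succ M ih =>
    rw [Finset.sum_range_succ]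
    have h := hT.key (T^[M] x) (T^[M] y)
    rw [← Function.iterate_succ_apply' T M x, ← Function.iterate_succ_apply' T M y] at h
    linarith

lemma FirmlyNonexpansive.uniform_bound {T : X → X} (hT : FirmlyNonexpansive T) (x y : X)
    (N : ℕ) (hN : 1 ≤ N) :
    ‖T^[2*N+1] x - T^[2*N] x‖ ≤ ‖x - y‖ / Real.sqrt N + ‖T^[N+1] y - T^[N] y‖ := by
  set u : ℕ → ℝ := fun k => ‖(T^[k] x - T^[k+1] x) - (T^[k] y - T^[k+1] y)‖ with hu
  have hsub : Finset.Ico N (2*N) ⊆ Finset.range (2*N) := by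
    intro k hk; simp only [Finset.mem_Ico] at hk; exact Finset.mem_range.mpr hk.2
  have hsum : ∑ k ∈ Finset.Ico N (2*N), (u k) ^ 2 ≤ ‖x - y‖ ^ 2 := by
    calc ∑ k ∈ Finset.Ico N (2*N), (u k) ^ 2
        ≤ ∑ k ∈ Finset.range (2*N), (u k) ^ 2 :=
          Finset.sum_le_sum_of_subset_of_nonneg hsub (fun k _ _ => sq_nonneg _)
      _ ≤ ‖x - y‖ ^ 2 - ‖T^[2*N] x - T^[2*N] y‖ ^ 2 := hT.telescoping x y (2*N)
      _ ≤ ‖x - y‖ ^ 2 := by nlinarith [sq_nonneg ‖T^[2*N] x - T^[2*N] y‖]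
  have hcard : (Finset.Ico N (2*N)).card = N := by
    rw [Nat.card_Ico]; omega
  have hne : (Finset.Ico N (2*N)).Nonempty := by
    rw [← Finset.card_pos, hcard]; omega
  have hconst : ∑ k ∈ Finset.Ico N (2*N), (u k) ^ 2
      ≤ ∑ _k ∈ Finset.Ico N (2*N), ‖x - y‖ ^ 2 / N := by
    rw [Finset.sum_const, hcard, nsmul_eq_mul]
    rw [mul_div_cancel₀]
    · exact hsum
    · positivity
  obtain ⟨k, hk, hkle⟩ := Finset.exists_le_of_sum_le hne hconst
  simp only [Finset.mem_Ico] at hk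
  have hNpos : (0:ℝ) < N := by exact_mod_cast (by omega : 0 < N)
  have huk : u k ≤ ‖x - y‖ / Real.sqrt N := by
    have h1 : u k = Real.sqrt ((u k) ^ 2) := (Real.sqrt_sq (norm_nonneg _)).symm
    rw [h1]
    have h2 : Real.sqrt ((u k)^2) ≤ Real.sqrt (‖x - y‖ ^ 2 / N) := Real.sqrt_le_sqrt hkle
    calc Real.sqrt ((u k)^2) ≤ Real.sqrt (‖x - y‖ ^ 2 / N) := h2
      _ = ‖x - y‖ / Real.sqrt N := by
          rw [Real.sqrt_div (sq_nonneg _), Real.sqrt_sq (norm_nonneg _)]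
  have hmono1 : ‖T^[2*N+1] x - T^[2*N] x‖ ≤ ‖T^[k+1] x - T^[k] x‖ :=
    hT.nonexpansive.iterate_diff_antitone x (le_of_lt hk.2)
  have hmono2 : ‖T^[k+1] y - T^[k] y‖ ≤ ‖T^[N+1] y - T^[N] y‖ :=
    hT.nonexpansive.iterate_diff_antitone y hk.1
  have htri : ‖T^[k+1] x - T^[k] x‖ ≤ u k + ‖T^[k+1] y - T^[k] y‖ := by
    have e : T^[k+1] x - T^[k] x
        = -(((T^[k] x - T^[k+1] x) - (T^[k] y - T^[k+1] y)) + (T^[k] y - T^[k+1] y)) := by abel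
    rw [e, norm_neg]
    calc ‖((T^[k] x - T^[k+1] x) - (T^[k] y - T^[k+1] y)) + (T^[k] y - T^[k+1] y)‖
        ≤ u k + ‖T^[k] y - T^[k+1] y‖ := norm_add_le _ _
      _ = u k + ‖T^[k+1] y - T^[k] y‖ := by rw [norm_sub_rev]
  linarith

/-- affine pointwise bound between two maps -/
def PtBd (A B : X → X) (C : ℝ) : Prop := ∀ x : X, ‖A x - B x‖ ≤ C * (1 + ‖x‖)

lemma Nonexpansive.ptBd {A B : X → X} (hA : Nonexpansive A) (hB : Nonexpansive B) :
    PtBd A B (2 + ‖A 0 - B 0‖) := by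
  intro x
  have h1 : ‖A x - B x‖ ≤ ‖A x - A 0‖ + ‖A 0 - B 0‖ + ‖B 0 - B x‖ := by
    have : A x - B x = (A x - A 0) + (A 0 - B 0) + (B 0 - B x) := by abel
    rw [this]; exact norm_add₃_le
  have h2 : ‖A x - A 0‖ ≤ ‖x‖ := by simpa using hA x 0
  have h3 : ‖B 0 - B x‖ ≤ ‖x‖ := by simpa [norm_sub_rev] using hB x 0
  have h4 : (0:ℝ) ≤ ‖A 0 - B 0‖ := norm_nonneg _
  nlinarith [norm_nonneg x]

lemma ballSup_bddAbove {A B : X → X} {C : ℝ} (h : PtBd A B C) (n : ℕ) :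
    BddAbove {r : ℝ | ∃ x : X, ‖x‖ ≤ (n : ℝ) ∧ r = ‖A x - B x‖} := by
  refine ⟨C * (1 + n), ?_⟩
  rintro r ⟨x, hx, rfl⟩
  calc ‖A x - B x‖ ≤ C * (1 + ‖x‖) := h x
    _ ≤ C * (1 + n) := by
        have hC : 0 ≤ C := by
          have := h 0; simp at this; nlinarith [norm_nonneg (A 0 - B 0)]
        nlinarith

lemma le_ballSup {A B : X → X} {C : ℝ} (h : PtBd A B C) (n : ℕ) {x : X} (hx : ‖x‖ ≤ (n:ℝ)) :
    ‖A x - B x‖ ≤ ballSup A B n :=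
  le_csSup (ballSup_bddAbove h n) ⟨x, hx, rfl⟩

lemma ballSup_nonneg {A B : X → X} {C : ℝ} (h : PtBd A B C) (n : ℕ) :
    0 ≤ ballSup A B n :=
  le_trans (norm_nonneg (A 0 - B 0)) (le_ballSup h n (x := 0) (by simp))

lemma ballSup_le {A B : X → X} {c : ℝ} (n : ℕ)
    (h : ∀ x : X, ‖x‖ ≤ (n:ℝ) → ‖A x - B x‖ ≤ c) : ballSup A B n ≤ c := by
  refine csSup_le ⟨‖A 0 - B 0‖, 0, by simp, rfl⟩ ?_
  rintro r ⟨x, hx, rfl⟩; exact h x hx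

lemma div_one_add_le_one {b : ℝ} (hb : 0 ≤ b) : b / (1 + b) ≤ 1 := by
  rw [div_le_one (by linarith)]; linarith

lemma div_one_add_le_self {b : ℝ} (hb : 0 ≤ b) : b / (1 + b) ≤ b := by
  rw [div_le_iff₀ (by linarith)]; nlinarith

lemma lt_of_div_one_add_lt {a b : ℝ} (ha : 0 ≤ a) (hb : 0 ≤ b)
    (h : a / (1 + a) < b / (1 + b)) : a < b := by
  by_contra hab
  push_neg at hab
  have : b / (1 + b) ≤ a / (1 + a) := by
    rw [div_le_div_iff₀ (by linarith) (by linarith)]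
    nlinarith
  linarith

lemma rho_term_nonneg {A B : X → X} {C : ℝ} (h : PtBd A B C) (k : ℕ) :
    0 ≤ (1 / 2 ^ (k + 1) : ℝ) * (ballSup A B (k+1) / (1 + ballSup A B (k+1))) := by
  have hb := ballSup_nonneg h (k+1)
  positivity

lemma rho_term_le {A B : X → X} {C : ℝ} (h : PtBd A B C) (k : ℕ) :
    (1 / 2 ^ (k + 1) : ℝ) * (ballSup A B (k+1) / (1 + ballSup A B (k+1)))
      ≤ (1/2 : ℝ) ^ (k+1) := by
  have hb := ballSup_nonneg h (k+1)
  have h1 := div_one_add_le_one hb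
  rw [div_pow, one_pow]
  calc (1 / 2 ^ (k + 1) : ℝ) * (ballSup A B (k+1) / (1 + ballSup A B (k+1)))
      ≤ (1 / 2 ^ (k + 1) : ℝ) * 1 := by
        apply mul_le_mul_of_nonneg_left h1 (by positivity)
    _ = (1 / 2 ^ (k+1) : ℝ) := mul_one _

lemma rho_summable {A B : X → X} {C : ℝ} (h : PtBd A B C) :
    Summable (fun k : ℕ => (1 / 2 ^ (k + 1) : ℝ) *
      (ballSup A B (k+1) / (1 + ballSup A B (k+1)))) := by
  have hgeo : Summable (fun k : ℕ => ((1:ℝ)/2) ^ k) :=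
    summable_geometric_of_lt_one (by norm_num) (by norm_num)
  apply Summable.of_nonneg_of_le (rho_term_nonneg h)
    (fun k => le_trans (rho_term_le h k)
      (pow_le_pow_of_le_one (by norm_num) (by norm_num) (by omega)))
    hgeo

lemma term_le_rho {A B : X → X} {C : ℝ} (h : PtBd A B C) (m : ℕ) :
    (1 / 2 ^ (m + 1) : ℝ) * (ballSup A B (m+1) / (1 + ballSup A B (m+1))) ≤ rho A B :=
  Summable.le_tsum (rho_summable h) m (fun k _ => rho_term_nonneg h k)

lemma rho_le_of_ptBd {A B : X → X} {C : ℝ} (hC : 0 ≤ C) (h : PtBd A B C) :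
    rho A B ≤ 4 * C := by
  have h1 : Summable (fun k : ℕ => (k:ℝ) * (1/2)^k) := by
    simpa using summable_pow_mul_geometric_of_norm_lt_one (R := ℝ) 1
      (r := (1/2:ℝ)) (by rw [Real.norm_eq_abs, abs_of_nonneg]; norm_num; norm_num)
  have h2 : Summable (fun k : ℕ => ((1:ℝ)/2)^k) :=
    summable_geometric_of_lt_one (by norm_num) (by norm_num)
  have hsum2 : Summable (fun k : ℕ => C * (((k:ℝ) + 2) * (1/2)^(k+1))) := by
    apply Summable.mul_left
    have : Summable (fun k : ℕ => (1/2:ℝ) * ((k:ℝ) * (1/2)^k) + 2 * ((1/2:ℝ) * (1/2)^k)) :=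
      (h1.mul_left _).add ((h2.mul_left _).mul_left _)
    apply this.congr
    intro k
    rw [pow_succ]
    ring
  have hle : ∀ k : ℕ, (1 / 2 ^ (k + 1) : ℝ) *
      (ballSup A B (k+1) / (1 + ballSup A B (k+1))) ≤ C * (((k:ℝ) + 2) * (1/2)^(k+1)) := by
    intro k
    have hb0 := ballSup_nonneg h (k+1)
    have hbk : ballSup A B (k+1) ≤ C * ((k:ℝ) + 2) := by
      apply ballSup_le
      intro x hx
      calc ‖A x - B x‖ ≤ C * (1 + ‖x‖) := h x
        _ ≤ C * ((k:ℝ) + 2) := by push_cast at hx ⊢; nlinarith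
    calc (1 / 2 ^ (k + 1) : ℝ) * (ballSup A B (k+1) / (1 + ballSup A B (k+1)))
        ≤ (1 / 2 ^ (k + 1) : ℝ) * ballSup A B (k+1) := by
          apply mul_le_mul_of_nonneg_left (div_one_add_le_self hb0) (by positivity)
      _ ≤ (1 / 2 ^ (k + 1) : ℝ) * (C * ((k:ℝ) + 2)) := by
          apply mul_le_mul_of_nonneg_left hbk (by positivity)
      _ = C * (((k:ℝ) + 2) * (1/2)^(k+1)) := by rw [div_pow]; ring
  have htsum : rho A B ≤ ∑' k : ℕ, C * (((k:ℝ) + 2) * (1/2)^(k+1)) :=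
    Summable.tsum_le_tsum hle (rho_summable h) hsum2
  have hval : ∑' k : ℕ, C * (((k:ℝ) + 2) * (1/2)^(k+1)) = 3 * C := by
    have e : ∀ k : ℕ, C * (((k:ℝ) + 2) * (1/2)^(k+1))
        = (C/2) * ((k:ℝ) * (1/2)^k) + C * ((1/2:ℝ)^k) := by
      intro k; rw [pow_succ]; ring
    rw [tsum_congr e, Summable.tsum_add ((h1.mul_left _)) (h2.mul_left _),
      tsum_mul_left, tsum_mul_left]
    have v1 : ∑' k : ℕ, (k:ℝ) * (1/2)^k = 2 := by
      rw [tsum_coe_mul_geometric_of_norm_lt_one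
        (by rw [Real.norm_eq_abs, abs_of_nonneg]; norm_num; norm_num)]
      norm_num
    have v2 : ∑' k : ℕ, ((1:ℝ)/2)^k = 2 := by
      rw [tsum_geometric_of_lt_one (by norm_num) (by norm_num)]; norm_num
    rw [v1, v2]; ring
  rw [hval] at htsum
  linarith

/-- From `rhoHat S T` small, extract pointwise closeness on a ball. -/
lemma close_of_rhoHat_lt {S T : X → X} (hS : FirmlyNonexpansive S) (hT : FirmlyNonexpansive T)
    (m : ℕ) {θ : ℝ} (hθ : 0 < θ)
    (h : rhoHat S T < (1 / 2 ^ (m + 1)) * ((2 * θ) / (1 + 2 * θ))) :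
    ∀ x : X, ‖x‖ ≤ ((m:ℝ) + 1) → ‖S x - T x‖ < θ := by
  have hptbd := hS.reflection_nonexpansive.ptBd hT.reflection_nonexpansive
  have hb0 := ballSup_nonneg hptbd (m+1)
  have hterm := term_le_rho hptbd m
  rw [rhoHat] at h
  have hg : ballSup (fun x => (2:ℝ) • S x - x) (fun x => (2:ℝ) • T x - x) (m+1) /
      (1 + ballSup (fun x => (2:ℝ) • S x - x) (fun x => (2:ℝ) • T x - x) (m+1))
      < (2 * θ) / (1 + 2 * θ) := by
    have hpos : (0:ℝ) < 1 / 2 ^ (m+1) := by positivity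
    have h3 := lt_of_le_of_lt hterm h
    exact (mul_lt_mul_iff_right₀ hpos).mp h3
  have hblt : ballSup (fun x => (2:ℝ) • S x - x) (fun x => (2:ℝ) • T x - x) (m+1) < 2 * θ :=
    lt_of_div_one_add_lt hb0 (by linarith) hg
  intro x hx
  have hx' : ‖x‖ ≤ ((m+1 : ℕ) : ℝ) := by push_cast; exact hx
  have h1 : ‖((2:ℝ) • S x - x) - ((2:ℝ) • T x - x)‖ ≤ ballSup _ _ (m+1) :=
    le_ballSup hptbd (m+1) hx'
  have h2 : ((2:ℝ) • S x - x) - ((2:ℝ) • T x - x) = (2:ℝ) • (S x - T x) := by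
    rw [smul_sub]; abel
  rw [h2, norm_smul] at h1
  simp only [Real.norm_ofNat] at h1
  linarith

/-- Closeness of iterates. -/
lemma iterate_close {S T : X → X} (hT : Nonexpansive T) {M θ : ℝ} (hθ : 0 ≤ θ)
    (hcl : ∀ y : X, ‖y‖ ≤ M → ‖S y - T y‖ ≤ θ) (x : X) (K : ℕ)
    (hTb : ∀ k, k ≤ K → ‖T^[k] x‖ + K * θ ≤ M) :
    ∀ k, k ≤ K → ‖S^[k] x - T^[k] x‖ ≤ k * θ := by
  intro k
  induction k with
  | zero => intro _; simp
  | succ k ih =>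
    intro hk
    have hk' : k ≤ K := by omega
    have ihk := ih hk'
    have hSk : ‖S^[k] x‖ ≤ M := by
      have h1 : ‖S^[k] x‖ ≤ ‖T^[k] x‖ + k * θ := by
        calc ‖S^[k] x‖ ≤ ‖S^[k] x - T^[k] x‖ + ‖T^[k] x‖ := by
              simpa using norm_add_le (S^[k] x - T^[k] x) (T^[k] x)
          _ ≤ k * θ + ‖T^[k] x‖ := by gcongr
          _ = ‖T^[k] x‖ + k * θ := by ring
      have h2 : (k:ℝ) * θ ≤ K * θ := by
        apply mul_le_mul_of_nonneg_right _ hθ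
        exact_mod_cast hk'
      have := hTb k hk'
      linarith
    rw [Function.iterate_succ_apply' S k, Function.iterate_succ_apply' T k]
    calc ‖S (S^[k] x) - T (T^[k] x)‖
        ≤ ‖S (S^[k] x) - T (S^[k] x)‖ + ‖T (S^[k] x) - T (T^[k] x)‖ := by
          simpa using norm_add_le (S (S^[k] x) - T (S^[k] x)) (T (S^[k] x) - T (T^[k] x))
      _ ≤ θ + ‖S^[k] x - T^[k] x‖ := by
          gcongr
          · exact hcl _ hSk
          · exact hT _ _
      _ ≤ θ + k * θ := by linarith
      _ = (k+1 : ℕ) * θ := by push_cast; ring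

/-- iterate bound for Lipschitz maps -/
lemma contraction_iterate_bound {S : X → X} {l : ℝ} (hl : 0 ≤ l)
    (hS : ∀ x y : X, ‖S x - S y‖ ≤ l * ‖x - y‖) (x : X) (N : ℕ) :
    ‖S^[N+1] x - S^[N] x‖ ≤ l ^ N * ‖S x - x‖ := by
  induction N with
  | zero => simp
  | succ N ih =>
    calc ‖S^[N+1+1] x - S^[N+1] x‖ = ‖S (S^[N+1] x) - S (S^[N] x)‖ := by
          rw [Function.iterate_succ_apply' S (N+1) x, Function.iterate_succ_apply' S N x]
      _ ≤ l * ‖S^[N+1] x - S^[N] x‖ := by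
          rw [Function.iterate_succ_apply' S N x]; exact hS _ _
      _ ≤ l * (l ^ N * ‖S x - x‖) := mul_le_mul_of_nonneg_left ih hl
      _ = l ^ (N+1) * ‖S x - x‖ := by ring

/-- the scaled map is firmly nonexpansive -/
lemma FirmlyNonexpansive.smul {T : X → X} (hT : FirmlyNonexpansive T) {γ : ℝ}
    (h0 : 0 ≤ γ) (h1 : γ ≤ 1) : FirmlyNonexpansive (fun x => (1 - γ) • T x) := by
  intro x y
  have h := hT x y
  have e1 : (1 - γ) • T x - (1 - γ) • T y = (1 - γ) • (T x - T y) := (smul_sub _ _ _).symm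
  simp only [e1, norm_smul, real_inner_smul_right, Real.norm_eq_abs,
    abs_of_nonneg (by linarith : (0:ℝ) ≤ 1 - γ)]
  have hnn : (0:ℝ) ≤ ‖T x - T y‖ ^ 2 := sq_nonneg _
  have key : (1 - γ) * ‖T x - T y‖ ^ 2 ≤ (1 - γ) * ⟪x - y, T x - T y⟫ :=
    mul_le_mul_of_nonneg_left h (by linarith)
  nlinarith [mul_nonneg (mul_nonneg h0 (by linarith : (0:ℝ) ≤ 1 - γ)) hnn]

/-- generically, firmly nonexpansive maps are asymptotically regular. -/
theorem generic_asymptotic_regularity :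
    ∃ O : ℕ → Set (X → X),
      (∀ n, O n ⊆ {T : X → X | FirmlyNonexpansive T}) ∧
      (∀ n, ∀ T ∈ O n, ∃ r > (0 : ℝ), ∀ S : X → X, FirmlyNonexpansive S → rhoHat S T < r → S ∈ O n) ∧
      (∀ n, ∀ T : X → X, FirmlyNonexpansive T → ∀ ε : ℝ, 0 < ε → ∃ S ∈ O n, rhoHat S T < ε) ∧
      (⋂ n, O n) = {T : X → X | FirmlyNonexpansive T ∧
        ∀ x : X, Tendsto (fun n : ℕ => ‖T^[n + 1] x - T^[n] x‖) atTop (nhds 0)} := by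
  refine ⟨fun n => {S : X → X | FirmlyNonexpansive S ∧ ∃ N : ℕ, ∃ c : ℝ,
      c < 1 / ((n:ℝ) + 1) ∧ ∀ x : X, ‖x‖ ≤ (n:ℝ) → ‖S^[N+1] x - S^[N] x‖ ≤ c},
    ?_, ?_, ?_, ?_⟩
  · -- each O n consists of firmly nonexpansive maps
    intro n S hS
    exact hS.1
  · -- openness
    intro n T hT
    obtain ⟨hTf, N, c, hc, hb⟩ := hT
    have hc0 : 0 ≤ c := le_trans (norm_nonneg _) (hb 0 (by simp))
    set gap : ℝ := 1 / ((n:ℝ)+1) - c with hgap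
    have hgappos : 0 < gap := by rw [hgap]; linarith
    set θ : ℝ := min (1/((N:ℝ)+1)) (gap/(4*(N:ℝ)+4)) with hθdef
    have hθpos : 0 < θ := lt_min (by positivity) (by positivity)
    set M : ℝ := (n:ℝ) + ((N:ℝ)+1) * ‖T 0‖ + 1 with hM
    set m : ℕ := ⌈M⌉₊ with hm
    refine ⟨(1 / 2 ^ (m + 1)) * ((2 * θ) / (1 + 2 * θ)), by positivity, ?_⟩
    intro S hSf hρ
    have hclose := close_of_rhoHat_lt hSf hTf m hθpos hρ
    have hMm : M ≤ (m:ℝ) + 1 := le_trans (Nat.le_ceil M) (by linarith)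
    have hclose' : ∀ y : X, ‖y‖ ≤ M → ‖S y - T y‖ ≤ θ :=
      fun y hy => le_of_lt (hclose y (le_trans hy hMm))
    have hTb : ∀ x : X, ‖x‖ ≤ (n:ℝ) → ∀ k, k ≤ N+1 → ‖T^[k] x‖ + (N+1:ℕ) * θ ≤ M := by
      intro x hx k hk
      have h1 := hTf.nonexpansive.iterate_norm_bound x k
      have h2 : (k:ℝ) * ‖T 0‖ ≤ ((N:ℝ)+1) * ‖T 0‖ := by
        apply mul_le_mul_of_nonneg_right _ (norm_nonneg _)
        push_cast
        exact_mod_cast (by exact_mod_cast hk : (k:ℝ) ≤ ((N+1:ℕ):ℝ))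
      have h3 : ((N+1:ℕ):ℝ) * θ ≤ 1 := by
        have hθ1 : θ ≤ 1/((N:ℝ)+1) := min_le_left _ _
        have hNpos : (0:ℝ) < (N:ℝ) + 1 := by positivity
        calc ((N+1:ℕ):ℝ) * θ ≤ ((N+1:ℕ):ℝ) * (1/((N:ℝ)+1)) := by
              apply mul_le_mul_of_nonneg_left hθ1 (by positivity)
          _ = 1 := by push_cast; field_simp
      rw [hM]
      push_cast at h3 ⊢
      linarith
    refine ⟨hSf, N, c + (2*(N:ℝ)+1) * θ, ?_, ?_⟩
    · have hθ2 : θ ≤ gap/(4*(N:ℝ)+4) := min_le_right _ _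
      have hmul : (2*(N:ℝ)+1) * θ ≤ (2*(N:ℝ)+1) * (gap/(4*(N:ℝ)+4)) := by
        apply mul_le_mul_of_nonneg_left hθ2 (by positivity)
      have hlt : (2*(N:ℝ)+1) * (gap/(4*(N:ℝ)+4)) < gap := by
        rw [mul_div_assoc']
        rw [div_lt_iff₀ (by positivity)]
        nlinarith [hgappos]
      have : gap = 1 / ((n:ℝ)+1) - c := hgap
      linarith
    · intro x hx
      have hiter := iterate_close hTf.nonexpansive (le_of_lt hθpos) hclose' x (N+1)
        (hTb x hx)
      have e1 := hiter (N+1) (le_refl _)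
      have e2 := hiter N (by omega)
      have e3 := hb x hx
      have e2' : ‖T^[N] x - S^[N] x‖ ≤ (N:ℝ) * θ := by rw [norm_sub_rev]; exact e2
      calc ‖S^[N+1] x - S^[N] x‖
          ≤ ‖S^[N+1] x - T^[N+1] x‖ + ‖T^[N+1] x - T^[N] x‖ + ‖T^[N] x - S^[N] x‖ := by
            have e : S^[N+1] x - S^[N] x = (S^[N+1] x - T^[N+1] x) + (T^[N+1] x - T^[N] x)
                + (T^[N] x - S^[N] x) := by abel
            rw [e]; exact norm_add₃_le
        _ ≤ ((N+1:ℕ):ℝ) * θ + c + (N:ℝ) * θ := by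
            apply add_le_add (add_le_add e1 e3) e2'
        _ = c + (2*(N:ℝ)+1) * θ := by push_cast; ring
  · -- denseness
    intro n T hTf ε hε
    have hc₀ : (0:ℝ) ≤ ‖T 0‖ := norm_nonneg _
    set γ : ℝ := min (1/2 : ℝ) (ε / (8 * (1 + ‖T 0‖) + 1)) with hγdef
    have hγpos : 0 < γ := lt_min (by norm_num) (div_pos hε (by positivity))
    have hγhalf : γ ≤ 1/2 := min_le_left _ _
    set S : X → X := fun x => (1 - γ) • T x with hSdef
    have hSf : FirmlyNonexpansive S := hTf.smul (by linarith) (by linarith)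
    have hScontr : ∀ x y : X, ‖S x - S y‖ ≤ (1-γ) * ‖x - y‖ := by
      intro x y
      have e : S x - S y = (1-γ) • (T x - T y) := by
        rw [hSdef]; exact (smul_sub _ _ _).symm
      rw [e, norm_smul, Real.norm_eq_abs, abs_of_nonneg (by linarith : (0:ℝ) ≤ 1-γ)]
      exact mul_le_mul_of_nonneg_left (hTf.nonexpansive x y) (by linarith)
    obtain ⟨N, hN⟩ : ∃ N : ℕ, (1-γ)^N * (2*(n:ℝ) + ‖T 0‖ + 1) < 1/((n:ℝ)+1) := by
      have h0 : Tendsto (fun N : ℕ => (1-γ)^N * (2*(n:ℝ) + ‖T 0‖ + 1)) atTop (nhds 0) := by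
        have := tendsto_pow_atTop_nhds_zero_of_lt_one
          (by linarith : (0:ℝ) ≤ 1 - γ) (by linarith : (1:ℝ) - γ < 1)
        simpa using this.mul_const (2*(n:ℝ) + ‖T 0‖ + 1)
      exact ((h0.eventually (gt_mem_nhds (show (0:ℝ) < 1/((n:ℝ)+1) by positivity))).exists)
    refine ⟨S, ⟨hSf, N, (1-γ)^N * (2*(n:ℝ) + ‖T 0‖ + 1), hN, ?_⟩, ?_⟩
    · intro x hx
      have h1 := contraction_iterate_bound (by linarith : (0:ℝ) ≤ 1-γ) hScontr x N
      have h2 : ‖S x - x‖ ≤ 2*(n:ℝ) + ‖T 0‖ + 1 := by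
        have ha : ‖S x - x‖ ≤ ‖S x - S 0‖ + ‖S 0 - 0‖ + ‖0 - x‖ := by
          have e : S x - x = (S x - S 0) + (S 0 - 0) + (0 - x) := by abel
          rw [e]; exact norm_add₃_le
        have hb1 : ‖S x - S 0‖ ≤ (1-γ) * ‖x - 0‖ := hScontr x 0
        have hb2 : ‖S 0 - 0‖ ≤ ‖T 0‖ := by
          rw [hSdef]
          simp only [sub_zero, norm_smul, Real.norm_eq_abs,
            abs_of_nonneg (by linarith : (0:ℝ) ≤ 1-γ)]
          nlinarith [norm_nonneg (T 0)]
        have hb3 : ‖0 - x‖ = ‖x‖ := by rw [norm_sub_rev, sub_zero]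
        rw [sub_zero] at hb1
        have : (1-γ) * ‖x‖ ≤ ‖x‖ := by nlinarith [norm_nonneg x]
        rw [hb3] at ha
        linarith
      calc ‖S^[N+1] x - S^[N] x‖ ≤ (1-γ)^N * ‖S x - x‖ := h1
        _ ≤ (1-γ)^N * (2*(n:ℝ) + ‖T 0‖ + 1) := by
            apply mul_le_mul_of_nonneg_left h2 (pow_nonneg (by linarith) N)
    · -- rhoHat S T < ε
      have hpt : PtBd (fun x => (2:ℝ) • S x - x) (fun x => (2:ℝ) • T x - x)
          (2 * γ * (1 + ‖T 0‖)) := by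
        intro x
        have e : ((2:ℝ) • S x - x) - ((2:ℝ) • T x - x) = (((2:ℝ)*(1-γ)) - 2) • T x := by
          rw [sub_smul]
          simp only [hSdef, smul_smul]
          abel
        have e' : (((2:ℝ)*(1-γ)) - 2) = -(2*γ) := by ring
        rw [e, e', norm_smul, Real.norm_eq_abs, abs_neg,
          abs_of_nonneg (by linarith : (0:ℝ) ≤ 2*γ)]
        have hTx : ‖T x‖ ≤ ‖x‖ + ‖T 0‖ := by
          calc ‖T x‖ ≤ ‖T x - T 0‖ + ‖T 0‖ := by
                simpa using norm_add_le (T x - T 0) (T 0)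
            _ ≤ ‖x - 0‖ + ‖T 0‖ := by gcongr; exact hTf.nonexpansive x 0
            _ = ‖x‖ + ‖T 0‖ := by rw [sub_zero]
        calc (2*γ) * ‖T x‖ ≤ (2*γ) * (‖x‖ + ‖T 0‖) := by
              apply mul_le_mul_of_nonneg_left hTx (by linarith)
          _ ≤ 2 * γ * (1 + ‖T 0‖) * (1 + ‖x‖) := by
              nlinarith [norm_nonneg x, norm_nonneg (T 0), hγpos.le,
                mul_nonneg (mul_nonneg hγpos.le (norm_nonneg (T 0))) (norm_nonneg x)]
      have hrho : rhoHat S T ≤ 4 * (2 * γ * (1 + ‖T 0‖)) := by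
        rw [rhoHat]
        exact rho_le_of_ptBd (by positivity) hpt
      have hγ2 : γ ≤ ε / (8 * (1 + ‖T 0‖) + 1) := min_le_right _ _
      have hD : (0:ℝ) < 8 * (1 + ‖T 0‖) + 1 := by linarith
      have h9 : γ * (8 * (1 + ‖T 0‖) + 1) ≤ ε := by
        rw [← le_div_iff₀ hD]
        exact hγ2
      nlinarith [hγpos]
  · -- intersection equals asymptotically regular maps
    ext T
    simp only [Set.mem_iInter, Set.mem_setOf_eq]
    constructor
    · intro h
      have hf : FirmlyNonexpansive T := (h 0).1
      refine ⟨hf, fun x => ?_⟩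
      rw [Metric.tendsto_atTop]
      intro ε hε
      obtain ⟨n, hn⟩ := exists_nat_ge (max ‖x‖ (1/ε))
      have hxn : ‖x‖ ≤ (n:ℝ) := le_trans (le_max_left _ _) hn
      have hεn : 1/((n:ℝ)+1) < ε := by
        have h1 : 1/ε ≤ (n:ℝ) := le_trans (le_max_right _ _) hn
        rw [div_lt_iff₀ (by positivity)]
        have h2 : 1 ≤ ε * (n:ℝ) := by
          rw [div_le_iff₀ hε] at h1
          linarith [mul_comm ε (n:ℝ)]
        nlinarith
      obtain ⟨_, N, c, hc, hb⟩ := h n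
      refine ⟨N, fun k hk => ?_⟩
      have h1 : ‖T^[k+1] x - T^[k] x‖ ≤ ‖T^[N+1] x - T^[N] x‖ :=
        hf.nonexpansive.iterate_diff_antitone x hk
      have h2 := hb x hxn
      rw [Real.dist_eq, sub_zero, abs_of_nonneg (norm_nonneg _)]
      linarith
    · intro h n
      obtain ⟨hf, hreg⟩ := h
      have hδ : (0:ℝ) < 1/(4*((n:ℝ)+1)) := by positivity
      obtain ⟨N₂, hN₂⟩ := (Metric.tendsto_atTop.mp (hreg 0)) (1/(4*((n:ℝ)+1))) hδ
      obtain ⟨N₁, hN₁⟩ := exists_nat_ge ((4*((n:ℝ)+1)*(n:ℝ))^2)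
      set N : ℕ := max (max N₁ N₂) 1 with hNdef
      have hN1 : 1 ≤ N := le_max_right _ _
      have hNN₁ : N₁ ≤ N := le_trans (le_max_left _ _) (le_max_left _ _)
      have hNN₂ : N₂ ≤ N := le_trans (le_max_right _ _) (le_max_left _ _)
      have hNpos : (0:ℝ) < Real.sqrt N := Real.sqrt_pos.mpr (by
        have : (1:ℝ) ≤ (N:ℝ) := by exact_mod_cast hN1
        linarith)
      have hsq : 4*((n:ℝ)+1)*(n:ℝ) ≤ Real.sqrt N := by
        have h1 : ((4*((n:ℝ)+1)*(n:ℝ))^2) ≤ (N:ℝ) :=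
          le_trans hN₁ (by exact_mod_cast hNN₁)
        calc 4*((n:ℝ)+1)*(n:ℝ) = Real.sqrt ((4*((n:ℝ)+1)*(n:ℝ))^2) :=
              (Real.sqrt_sq (by positivity)).symm
          _ ≤ Real.sqrt N := Real.sqrt_le_sqrt h1
      have hterm1 : (n:ℝ) / Real.sqrt N ≤ 1/(4*((n:ℝ)+1)) := by
        rw [div_le_div_iff₀ hNpos (by positivity)]
        nlinarith [hsq]
      have hterm2 : ‖T^[N+1] 0 - T^[N] 0‖ ≤ 1/(4*((n:ℝ)+1)) := by
        have h1 := hN₂ N hNN₂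
        rw [Real.dist_eq, sub_zero, abs_of_nonneg (norm_nonneg _)] at h1
        linarith
      refine ⟨hf, 2*N, 1/(2*((n:ℝ)+1)), ?_, ?_⟩
      · rw [div_lt_div_iff₀ (by positivity) (by positivity)]
        nlinarith [Nat.cast_nonneg (α := ℝ) n]
      · intro x hx
        have hub := hf.uniform_bound x 0 N hN1
        have hxy : ‖x - 0‖ ≤ (n:ℝ) := by rw [sub_zero]; exact hx
        have h1 : ‖x - 0‖ / Real.sqrt N ≤ (n:ℝ) / Real.sqrt N := by
          gcongr
        calc ‖T^[2*N+1] x - T^[2*N] x‖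
            ≤ ‖x - 0‖ / Real.sqrt N + ‖T^[N+1] 0 - T^[N] 0‖ := hub
          _ ≤ (n:ℝ) / Real.sqrt N + 1/(4*((n:ℝ)+1)) := add_le_add h1 hterm2
          _ ≤ 1/(4*((n:ℝ)+1)) + 1/(4*((n:ℝ)+1)) := by
              exact add_le_add hterm1 (le_refl _)
          _ = 1/(2*((n:ℝ)+1)) := by field_simp; ring
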